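/- For every cost-trace w satisfying the κ-condition, every position n, and every valuation α: (w,n,α) ⊨ F_{>y}φ if and only if there exists j ≥ 0 with Σ_{k=n}^{n+j-1} cₖ > α(y) and (w,n+j,α) ⊨ φ, where F_{>y}φ is defined as the formula G_{≤y} F X (κ ∧ F φ). -/

import Mathlib

inductive cPLTL (P V : Type) : Type
  | pos (p : P)
  | neg (p : P)
  | and (φ ψ : cPLTL P V)
  | or (φ ψ : cPLTL P V)
  | next (φ : cPLTL P V)
  | until_ (φ ψ : cPLTL P V)
  | release (φ ψ : cPLTL P V)
  | fle (z : V) (φ : cPLTL P V)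
  | gle (z : V) (φ : cPLTL P V)

def cost (c : ℕ → ℕ) (n j : ℕ) : ℕ := ∑ k ∈ Finset.range j, c (n + k)

def Sat {P V : Type} (w : ℕ → Set P) (c : ℕ → ℕ) (α : V → ℕ) : cPLTL P V → ℕ → Prop
  | .pos p, n => p ∈ w n
  | .neg p, n => p ∉ w n
  | .and φ ψ, n => Sat w c α φ n ∧ Sat w c α ψ n
  | .or φ ψ, n => Sat w c α φ n ∨ Sat w c α ψ n
  | .next φ, n => Sat w c α φ (n + 1)
  | .until_ φ ψ, n => ∃ j, Sat w c α ψ (n + j) ∧ ∀ k < j, Sat w c α φ (n + k)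
  | .release φ ψ, n => ∀ j, Sat w c α ψ (n + j) ∨ ∃ k < j, Sat w c α φ (n + k)
  | .fle z φ, n => ∃ j, cost c n j ≤ α z ∧ Sat w c α φ (n + j)
  | .gle z φ, n => ∀ j, cost c n j ≤ α z → Sat w c α φ (n + j)

/-- tt := κ ∨ ¬κ, Fψ := tt U ψ. -/
def Fm {P V : Type} (κ : P) (ψ : cPLTL P V) : cPLTL P V :=
  .until_ (.or (.pos κ) (.neg κ)) ψ

/-- F_{>y}φ := G_{≤y} F X (κ ∧ F φ). -/
def FGt {P V : Type} (κ : P) (y : V) (φ : cPLTL P V) : cPLTL P V :=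
  .gle y (Fm κ (.next (.and (.pos κ) (Fm κ φ))))

lemma Fm_iff {P V : Type} (κ : P) (w : ℕ → Set P) (c : ℕ → ℕ) (α : V → ℕ)
    (ψ : cPLTL P V) (m : ℕ) :
    Sat w c α (Fm κ ψ) m ↔ ∃ i, Sat w c α ψ (m + i) := by
  simp only [Fm, Sat]
  constructor
  · rintro ⟨i, h, -⟩; exact ⟨i, h⟩
  · rintro ⟨i, h⟩; exact ⟨i, h, fun k _ => em _⟩

lemma cost_mono (c : ℕ → ℕ) (n : ℕ) {j j' : ℕ} (h : j ≤ j') :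
    cost c n j ≤ cost c n j' :=
  Finset.sum_le_sum_of_subset (Finset.range_subset_range.2 h)

lemma cost_succ (c : ℕ → ℕ) (n j : ℕ) : cost c n (j + 1) = cost c n j + c (n + j) :=
  Finset.sum_range_succ _ _

lemma exists_pos_of_cost_lt (c : ℕ → ℕ) (n : ℕ) {a b : ℕ}
    (h : cost c n a < cost c n b) :
    ∃ k, a ≤ k ∧ k < b ∧ 0 < c (n + k) := by
  by_contra hc
  push_neg at hc
  have hab : a ≤ b := by
    by_contra hba
    exact absurd (cost_mono c n (le_of_not_ge hba)) (not_le.2 h)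
  have : cost c n b = cost c n a := by
    unfold cost
    rw [Finset.range_eq_Ico, Finset.range_eq_Ico,
      ← Finset.sum_Ico_consecutive _ (Nat.zero_le a) hab]
    have : ∑ k ∈ Finset.Ico a b, c (n + k) = 0 := by
      apply Finset.sum_eq_zero
      intro k hk
      rw [Finset.mem_Ico] at hk
      exact Nat.le_zero.1 (hc k hk.1 hk.2)
    omega
  omega

lemma FGt_iff {P V : Type} (κ : P) (w : ℕ → Set P) (c : ℕ → ℕ) (α : V → ℕ)
    (y : V) (φ : cPLTL P V) (n : ℕ) :
    Sat w c α (FGt κ y φ) n ↔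
      ∀ j, cost c n j ≤ α y →
        ∃ i, κ ∈ w (n + j + i + 1) ∧ ∃ i', Sat w c α φ (n + j + i + 1 + i') := by
  show (∀ j, cost c n j ≤ α y → Sat w c α (Fm κ _) (n + j)) ↔ _
  apply forall_congr'; intro j
  apply imp_congr_right; intro _
  rw [Fm_iff]
  apply exists_congr; intro i
  show (κ ∈ w (n + j + i + 1) ∧ Sat w c α (Fm κ φ) (n + j + i + 1)) ↔ _
  rw [Fm_iff]

theorem F_gt_correct {P V : Type} (κ : P) (w : ℕ → Set P) (c : ℕ → ℕ)
    (hκ : ∀ n, 0 < c n ↔ κ ∈ w (n + 1))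
    (n : ℕ) (α : V → ℕ) (y : V) (φ : cPLTL P V) :
    Sat w c α (FGt κ y φ) n ↔
      ∃ j, α y < cost c n j ∧ Sat w c α φ (n + j) := by
  rw [FGt_iff]
  constructor
  · intro h
    by_cases hex : ∃ j, α y < cost c n j
    · -- take minimal such J
      have hJ0 : Nat.find hex ≠ 0 := by
        intro h0
        have := Nat.find_spec hex
        rw [h0] at this
        simp [cost] at this
      set J := Nat.find hex with hJdef
      have hJspec : α y < cost c n J := Nat.find_spec hex
      have hJ' : cost c n (J - 1) ≤ α y :=
        not_lt.1 (Nat.find_min hex (Nat.sub_lt (Nat.pos_of_ne_zero hJ0) one_pos))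
      obtain ⟨i, -, i', hφ⟩ := h (J - 1) hJ'
      refine ⟨J - 1 + i + 1 + i', ?_, ?_⟩
      · calc α y < cost c n J := hJspec
          _ ≤ cost c n (J - 1 + i + 1 + i') := cost_mono c n (by omega)
      · have : n + (J - 1) + i + 1 + i' = n + (J - 1 + i + 1 + i') := by omega
        rwa [this] at hφ
    · exfalso
      push_neg at hex
      have key : ∀ j, ∃ k, j ≤ k ∧ 0 < c (n + k) := by
        intro j
        obtain ⟨i, hκi, -⟩ := h j (hex j)
        refine ⟨j + i, Nat.le_add_right _ _, (hκ (n + (j + i))).2 ?_⟩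
        have : n + (j + i) + 1 = n + j + i + 1 := by omega
        rw [this]; exact hκi
      have unb : ∀ B, ∃ j, B < cost c n j := by
        intro B
        induction B with
        | zero =>
          obtain ⟨k, -, hck⟩ := key 0
          exact ⟨k + 1, by rw [cost_succ]; omega⟩
        | succ B ih =>
          obtain ⟨j, hj⟩ := ih
          obtain ⟨k, hjk, hck⟩ := key j
          have := cost_mono c n hjk
          exact ⟨k + 1, by rw [cost_succ]; omega⟩
      obtain ⟨j, hj⟩ := unb (α y)
      exact absurd (hex j) (not_le.2 hj)
  · rintro ⟨j, hj, hφ⟩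
    intro j' hj'
    have hlt : cost c n j' < cost c n j := lt_of_le_of_lt hj' hj
    obtain ⟨k, hk1, hk2, hck⟩ := exists_pos_of_cost_lt c n hlt
    refine ⟨k - j', ?_, j - (k + 1), ?_⟩
    · have h1 : n + j' + (k - j') + 1 = n + k + 1 := by omega
      rw [h1]
      exact (hκ (n + k)).1 hck
    · have h2 : n + j' + (k - j') + 1 + (j - (k + 1)) = n + j := by omega
      rwa [h2]
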